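/- Let (x_n) be a monotone increasing sequence in [0,+∞]. Then for λ ∈ (0,1), the quantity (1-λ)·∑_{n=1}^∞ λ^n x_n is monotone increasing in λ, and its limit as λ ↑ 1 equals sup_{n≥1} x_n. -/

import Mathlib

open scoped ENNReal
open Filter Set Topology

private noncomputable def dd (x : ℕ → ℝ≥0∞) : ℕ → ℝ≥0∞
  | 0 => x 1
  | (n + 1) => x (n + 2) - x (n + 1)

private lemma sum_dd (x : ℕ → ℝ≥0∞) (hx : Monotone x) (n : ℕ) :
    ∑ k ∈ Finset.range (n + 1), dd x k = x (n + 1) := by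
  induction n with
  | zero => simp [dd]
  | succ n ih =>
      rw [Finset.sum_range_succ, ih]
      exact add_tsub_cancel_of_le (hx (by omega))

private lemma geom_tail (l c : ℝ≥0∞) (k : ℕ) :
    ∑' n : ℕ, (if k ≤ n then l ^ (n + 1) * c else 0) = l ^ (k + 1) * c * (1 - l)⁻¹ := by
  rw [← Summable.sum_add_tsum_nat_add' (f := fun n : ℕ => (if k ≤ n then l ^ (n + 1) * c else 0))
    (k := k) ENNReal.summable]
  have h1 : ∑ i ∈ Finset.range k, (if k ≤ i then l ^ (i + 1) * c else 0) = 0 := by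
    apply Finset.sum_eq_zero
    intro i hi
    simp only [Finset.mem_range] at hi
    simp [Nat.not_le.mpr hi]
  rw [h1, zero_add]
  have h2 : ∀ i : ℕ, (if k ≤ i + k then l ^ (i + k + 1) * c else 0)
      = l ^ (k + 1) * c * l ^ i := by
    intro i
    rw [if_pos (Nat.le_add_left k i)]
    ring
  simp only [h2]
  rw [ENNReal.tsum_mul_left, ENNReal.tsum_geometric]

private lemma identity (x : ℕ → ℝ≥0∞) (hx : Monotone x) (l : ℝ≥0∞) (hl : l < 1) :
    (1 - l) * ∑' n : ℕ, l ^ (n + 1) * x (n + 1) = ∑' n : ℕ, l ^ (n + 1) * dd x n := by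
  have hne0 : (1 - l) ≠ 0 := by
    simpa [tsub_eq_zero_iff_le] using not_le.mpr hl
  have hnetop : (1 - l) ≠ ∞ := (tsub_le_self.trans_lt ENNReal.one_lt_top).ne
  have h1 : ∀ n : ℕ, l ^ (n + 1) * x (n + 1)
      = ∑' k : ℕ, (if k ≤ n then l ^ (n + 1) * dd x k else 0) := by
    intro n
    rw [tsum_eq_sum (s := Finset.range (n + 1)) (by
      intro k hk
      simp only [Finset.mem_range] at hk
      rw [if_neg (by omega)])]
    rw [Finset.sum_congr rfl (fun k hk => by
      simp only [Finset.mem_range] at hk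
      rw [if_pos (by omega)]), ← Finset.mul_sum, sum_dd x hx]
  calc (1 - l) * ∑' n : ℕ, l ^ (n + 1) * x (n + 1)
      = (1 - l) * ∑' n : ℕ, ∑' k : ℕ, (if k ≤ n then l ^ (n + 1) * dd x k else 0) := by
        simp only [h1]
    _ = (1 - l) * ∑' k : ℕ, ∑' n : ℕ, (if k ≤ n then l ^ (n + 1) * dd x k else 0) := by
        rw [ENNReal.tsum_comm]
    _ = (1 - l) * ∑' k : ℕ, l ^ (k + 1) * dd x k * (1 - l)⁻¹ := by
        simp only [geom_tail]
    _ = ∑' k : ℕ, (1 - l) * (l ^ (k + 1) * dd x k * (1 - l)⁻¹) := by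
        rw [ENNReal.tsum_mul_left]
    _ = ∑' k : ℕ, l ^ (k + 1) * dd x k := by
        congr 1
        funext k
        rw [mul_comm (l ^ (k + 1) * dd x k) (1 - l)⁻¹, ← mul_assoc,
          ENNReal.mul_inv_cancel hne0 hnetop, one_mul]

private lemma tsum_dd (x : ℕ → ℝ≥0∞) (hx : Monotone x) :
    ∑' n : ℕ, dd x n = ⨆ n : ℕ, x (n + 1) := by
  rw [ENNReal.tsum_eq_iSup_nat]
  apply le_antisymm
  · refine iSup_le fun N => ?_
    cases N with
    | zero => simp
    | succ n => rw [sum_dd x hx]; exact le_iSup (fun n => x (n + 1)) n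
  · refine iSup_le fun n => ?_
    rw [← sum_dd x hx n]
    exact le_iSup (fun N => ∑ k ∈ Finset.range N, dd x k) (n + 1)

/-- For a monotone increasing sequence `x` in `[0,∞]`, the quantity
`(1-λ) ∑_{n=1}^∞ λ^n x_n` is monotone increasing in `λ ∈ (0,1)`, and its limit
as `λ ↑ 1` equals `sup_{n ≥ 1} x_n`. -/
theorem stmt0 (x : ℕ → ℝ≥0∞) (hx : Monotone x) :
    (∀ l₁ l₂ : ℝ≥0∞, 0 < l₁ → l₁ < l₂ → l₂ < 1 →
      (1 - l₁) * ∑' n : ℕ, l₁ ^ (n + 1) * x (n + 1) ≤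
        (1 - l₂) * ∑' n : ℕ, l₂ ^ (n + 1) * x (n + 1)) ∧
    Filter.Tendsto (fun l : ℝ≥0∞ => (1 - l) * ∑' n : ℕ, l ^ (n + 1) * x (n + 1))
      (nhdsWithin 1 (Set.Iio 1)) (nhds (⨆ n : ℕ, x (n + 1))) := by
  set F : ℝ≥0∞ → ℝ≥0∞ := fun l => (1 - l) * ∑' n : ℕ, l ^ (n + 1) * x (n + 1) with hF
  have hmono : MonotoneOn F (Iio 1) := by
    intro a ha b hb hab
    simp only [hF]
    rw [identity x hx a ha, identity x hx b hb]
    exact ENNReal.tsum_le_tsum fun n =>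
      mul_le_mul' (pow_le_pow_left₀ zero_le hab (n + 1)) le_rfl
  constructor
  · intro l₁ l₂ h0 h12 h2
    exact hmono (Set.mem_Iio.mpr (h12.trans h2)) (Set.mem_Iio.mpr h2) h12.le
  · have htendsto := hmono.tendsto_nhdsLT (OrderTop.bddAbove _)
    have hsup : sSup (F '' Iio 1) = ⨆ n : ℕ, x (n + 1) := by
      apply le_antisymm
      · refine sSup_le ?_
        rintro _ ⟨l, hl, rfl⟩
        rw [hF]
        simp only
        rw [identity x hx l hl, ← tsum_dd x hx]
        refine ENNReal.tsum_le_tsum fun n => ?_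
        calc l ^ (n + 1) * dd x n ≤ 1 * dd x n := by
              exact mul_le_mul' (pow_le_one' hl.le (n + 1)) le_rfl
          _ = dd x n := one_mul _
      · rw [← tsum_dd x hx, ENNReal.tsum_eq_iSup_nat]
        refine iSup_le fun N => ?_
        have htend : Tendsto (fun l : ℝ≥0∞ => ∑ k ∈ Finset.range N, l ^ (k + 1) * dd x k)
            (𝓝[<] (1 : ℝ≥0∞)) (𝓝 (∑ k ∈ Finset.range N, dd x k)) := by
          refine tendsto_finset_sum _ fun k _ => ?_
          have hp : Tendsto (fun l : ℝ≥0∞ => l ^ (k + 1)) (𝓝[<] (1 : ℝ≥0∞)) (𝓝 1) := by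
            have := ((ENNReal.continuous_pow (k + 1)).tendsto 1).mono_left
              (nhdsWithin_le_nhds (s := Iio (1 : ℝ≥0∞)))
            simpa using this
          have := ENNReal.Tendsto.mul_const hp (Or.inl one_ne_zero) (b := dd x k)
          simpa using this
        refine le_of_tendsto htend ?_
        filter_upwards [self_mem_nhdsWithin] with l hl
        calc ∑ k ∈ Finset.range N, l ^ (k + 1) * dd x k
            ≤ ∑' k : ℕ, l ^ (k + 1) * dd x k := ENNReal.sum_le_tsum _
          _ = F l := (identity x hx l hl).symm
          _ ≤ sSup (F '' Iio 1) := le_sSup ⟨l, hl, rfl⟩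
    rw [← hsup]
    exact htendsto
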